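/- Let P be a totally ordered set and V a pointwise finite dimensional persistence module indexed by P. Assume P has a minimal element z and V_z ≠ 0. Let B be a basis of V_z compatible with the flag of kernels of V at z, and let v ∈ B. Then there exists an internal direct sum decomposition V = U ⊕ W such that: (1) U is an interval module; (2) {v} is a basis of U_z; (3) B − {v} is a basis of W_z. -/

import Mathlib

universe u v w w'

/-- A persistence module indexed by a poset `P`, over a field `k`. -/
structure PersMod (k : Type u) [Field k] (P : Type v) [PartialOrder P] :
    Type (max u v (w + 1)) where
  space : P → Type w
  [acg : ∀ x, AddCommGroup (space x)]
  [mod : ∀ x, Module k (space x)]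
  map : ∀ {x y : P}, x ≤ y → (space x →ₗ[k] space y)
  map_id : ∀ x : P, map (le_refl x) = LinearMap.id
  map_comp : ∀ {x y z : P} (hxy : x ≤ y) (hyz : y ≤ z),
    (map hyz).comp (map hxy) = map (hxy.trans hyz)

attribute [instance] PersMod.acg PersMod.mod

variable (k : Type u) [Field k] {P : Type v} [PartialOrder P]

/-- A morphism of persistence modules (a natural transformation). -/
structure PersHom (V : PersMod.{u, v, w} k P) (W : PersMod.{u, v, w'} k P) where
  app : ∀ x : P, V.space x →ₗ[k] W.space x
  natural : ∀ {x y : P} (h : x ≤ y) (v : V.space x),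
    app y (V.map h v) = W.map h (app x v)

/-- An isomorphism of persistence modules. -/
structure PersIso (V : PersMod.{u, v, w} k P) (W : PersMod.{u, v, w'} k P) where
  app : ∀ x : P, V.space x ≃ₗ[k] W.space x
  natural : ∀ {x y : P} (h : x ≤ y) (v : V.space x),
    app y (V.map h v) = W.map h (app x v)

/-- A subset `I` of a poset is convex if `x ≤ y ≤ z`, `x ∈ I`, `z ∈ I` imply `y ∈ I`. -/
def IsConvexIn (I : Set P) : Prop :=
  ∀ ⦃x y z : P⦄, x ∈ I → z ∈ I → x ≤ y → y ≤ z → y ∈ I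

/-- A subset `I` of a poset is connected if any two points of `I` are joined by a
zigzag path inside `I`. -/
def IsConnectedIn (I : Set P) : Prop :=
  ∀ x ∈ I, ∀ z ∈ I, ∃ (n : ℕ) (c : ℕ → P), (∀ i ≤ n, c i ∈ I) ∧ c 0 = x ∧ c n = z ∧
    ∀ i < n, c i ≤ c (i + 1) ∨ c (i + 1) ≤ c i

/-- An interval in a poset: nonempty, convex and connected. -/
def IsPosetInterval (I : Set P) : Prop :=
  I.Nonempty ∧ IsConvexIn I ∧ IsConnectedIn I

open Classical in
/-- The subspace of `k` used as the value of the constant module at `x`. -/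
noncomputable def constSub (I : Set P) (x : P) : Submodule k k :=
  if x ∈ I then ⊤ else ⊥

open Classical in
/-- The structure map of the constant module. -/
noncomputable def constMap (I : Set P) (x y : P) :
    constSub k I x →ₗ[k] constSub k I y :=
  LinearMap.codRestrict (constSub k I y)
    ((if y ∈ I then (LinearMap.id : k →ₗ[k] k) else 0).comp (constSub k I x).subtype)
    (fun c => by
      by_cases hy : y ∈ I
      · simp [constSub, hy]
      · simp only [constSub, hy, if_false]
        exact Submodule.zero_mem _)

open Classical in
/-- The constant (interval) module `M(I)` attached to a convex subset `I`. -/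
noncomputable def constMod (I : Set P) (hI : IsConvexIn I) : PersMod.{u, v, u} k P where
  space x := constSub k I x
  map {x y} _ := constMap k I x y
  map_id := fun x => by
    ext c
    by_cases hx : x ∈ I
    · simp [constMap, hx]
    · have hc : (c : k) = 0 := by
        have this : (c : k) ∈ constSub k I x := c.2
        simp only [constSub, hx, if_false] at this
        exact (Submodule.mem_bot k).mp this
      simp [constMap, hx, hc]
  map_comp := fun {x y z} hxy hyz => by
    ext c
    by_cases hz : z ∈ I
    · by_cases hy : y ∈ I
      · simp [constMap, hy, hz]
      · have hx : x ∉ I := fun hx => hy (hI hx hz hxy hyz)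
        have hc : (c : k) = 0 := by
          have this : (c : k) ∈ constSub k I x := c.2
          simp only [constSub, hx, if_false] at this
          exact (Submodule.mem_bot k).mp this
        simp [constMap, hy, hz, hc]
    · simp [constMap, hz]

/-- A submodule of a persistence module: a family of subspaces preserved by the
structure maps. -/
structure PersSubmod (V : PersMod.{u, v, w} k P) where
  carrier : ∀ x : P, Submodule k (V.space x)
  mapLe : ∀ {x y : P} (h : x ≤ y), ∀ v ∈ carrier x, V.map h v ∈ carrier y

/-- A submodule of a persistence module, viewed as a persistence module in its own
right. -/
def PersSubmod.toPersMod {V : PersMod.{u, v, w} k P} (U : PersSubmod k V) :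
    PersMod.{u, v, w} k P where
  space x := U.carrier x
  map {x y} h := (V.map h).restrict (U.mapLe h)
  map_id := fun x => by
    ext c
    simp [LinearMap.restrict_apply, V.map_id]
  map_comp := fun {x y z} hxy hyz => by
    ext c
    have := LinearMap.congr_fun (V.map_comp hxy hyz) (c : V.space x)
    simpa [LinearMap.restrict_apply] using this

/-- A persistence module is an interval module if it is isomorphic to a constant
module `M(I)` for some interval `I`. -/
def IsIntervalModule (V : PersMod.{u, v, w} k P) : Prop :=
  ∃ (I : Set P) (hI : IsPosetInterval I), Nonempty (PersIso k V (constMod k I hI.2.1))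

/-- `A` is an internal direct sum decomposition of `V`:
at each point the subspaces are independent and span everything. -/
def IsDecomp (V : PersMod.{u, v, w} k P) (A : Set (PersSubmod k V)) : Prop :=
  ∀ x : P, iSupIndep (fun U : A => (U : PersSubmod k V).carrier x) ∧
    ⨆ U : A, (U : PersSubmod k V).carrier x = ⊤

/-- An interval decomposition of `V`. -/
def IsIntervalDecomp (V : PersMod.{u, v, w} k P) (A : Set (PersSubmod k V)) : Prop :=
  IsDecomp k V A ∧ ∀ U ∈ A, IsIntervalModule k U.toPersMod

/-- `V` has an interval decomposition. -/
def HasIntervalDecomp (V : PersMod.{u, v, w} k P) : Prop :=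
  ∃ A : Set (PersSubmod k V), IsIntervalDecomp k V A

section SplitAux

open Submodule

variable {k₀ : Type u} [Field k₀]

/-- Given `u ∉ M`, there is a complement of `span {u}` containing `M`. -/
lemma aux_exists_compl {E : Type w} [AddCommGroup E] [Module k₀ E]
    (M : Submodule k₀ E) (u : E) (hu : u ∉ M) :
    ∃ W : Submodule k₀ E, M ≤ W ∧ IsCompl (span k₀ {u}) W := by
  obtain ⟨W₀, hW₀⟩ := Submodule.exists_isCompl (M ⊔ span k₀ {u})
  refine ⟨M ⊔ W₀, le_sup_left, ?_, ?_⟩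
  · rw [disjoint_def]
    intro w hw1 hw2
    obtain ⟨c, rfl⟩ := mem_span_singleton.mp hw1
    obtain ⟨m, hm, w₀, hw₀, hsum⟩ := mem_sup.mp hw2
    have hw0mem : w₀ ∈ M ⊔ span k₀ {u} := by
      have hval : w₀ = c • u - m := by
        rw [← hsum]; abel
      rw [hval]
      exact Submodule.sub_mem _ (Submodule.mem_sup_right (smul_mem _ _ (mem_span_singleton_self _)))
        (Submodule.mem_sup_left hm)
    have hw0 : w₀ = 0 := (disjoint_def.mp hW₀.disjoint) w₀ hw0mem hw₀
    have hcu : c • u ∈ M := by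
      rw [← hsum, hw0, add_zero]; exact hm
    by_cases hc : c = 0
    · rw [hc, zero_smul]
    · refine absurd ?_ hu
      have := M.smul_mem c⁻¹ hcu
      rwa [smul_smul, inv_mul_cancel₀ hc, one_smul] at this
  · rw [codisjoint_iff, ← sup_assoc, sup_comm (span k₀ {u}) M, sup_assoc]
    rw [← codisjoint_iff]
    have := hW₀.codisjoint
    rwa [codisjoint_iff, sup_assoc, ← codisjoint_iff] at this

end SplitAux

namespace SplitIntervalAux

open Submodule

variable {k : Type u} [Field k] {P : Type v} [LinearOrder P]
variable (V : PersMod.{u, v, w} k P) (z : P) (hz : ∀ x : P, z ≤ x) (v : V.space z)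

/-- The image of the distinguished vector `v` at each point. -/
noncomputable def uvec (x : P) : V.space x := V.map (hz x) v

lemma uvec_map {x y : P} (h : x ≤ y) : V.map h (uvec V z hz v x) = uvec V z hz v y :=
  LinearMap.congr_fun (V.map_comp (hz x) h) v

/-- The support of the would-be interval summand. -/
def Iset : Set P := {x | uvec V z hz v x ≠ 0}

lemma Iset_down {x y : P} (h : x ≤ y) (hy : y ∈ Iset V z hz v) : x ∈ Iset V z hz v := by
  intro h0
  apply hy
  rw [← uvec_map V z hz v h, h0, map_zero]

/-- A "good" partial system of complements: a partial function (given by its graph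
`G`) assigning to points of `Iset` complements of the line spanned by `uvec`,
compatible with the structure maps, containing the seed at `z`, downward closed,
and absorbing all kernels into the complements. -/
def Good (S : Set (V.space z)) (G : Set ((x : P) × Submodule k (V.space x))) : Prop :=
  (∀ p ∈ G, p.1 ∈ Iset V z hz v) ∧
  (∀ (x : P) (W W' : Submodule k (V.space x)),
      (⟨x, W⟩ : (x : P) × Submodule k (V.space x)) ∈ G →
      (⟨x, W'⟩ : (x : P) × Submodule k (V.space x)) ∈ G → W = W') ∧
  ((⟨z, span k S⟩ : (x : P) × Submodule k (V.space x)) ∈ G) ∧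
  (∀ p ∈ G, ∀ y, y ∈ Iset V z hz v → y ≤ p.1 →
      ∃ W' : Submodule k (V.space y), (⟨y, W'⟩ : (x : P) × Submodule k (V.space x)) ∈ G) ∧
  (∀ (x y : P) (W : Submodule k (V.space x)) (W' : Submodule k (V.space y)) (h : x ≤ y),
      (⟨x, W⟩ : (x : P) × Submodule k (V.space x)) ∈ G →
      (⟨y, W'⟩ : (x : P) × Submodule k (V.space x)) ∈ G →
      Submodule.map (V.map h) W ≤ W') ∧
  (∀ (x : P) (W : Submodule k (V.space x)),
      (⟨x, W⟩ : (x : P) × Submodule k (V.space x)) ∈ G →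
      IsCompl (span k {uvec V z hz v x}) W) ∧
  (∀ (x : P) (W : Submodule k (V.space x)),
      (⟨x, W⟩ : (x : P) × Submodule k (V.space x)) ∈ G →
      ∀ (x' : P) (h : x ≤ x'), x' ∈ Iset V z hz v → LinearMap.ker (V.map h) ≤ W)

lemma good_extend (S : Set (V.space z)) (G : Set ((x : P) × Submodule k (V.space x)))
    (hG : Good V z hz v S G) (x : P) (hxI : x ∈ Iset V z hz v)
    (hx : ∀ W : Submodule k (V.space x),
      (⟨x, W⟩ : (x : P) × Submodule k (V.space x)) ∉ G) :
    ∃ G', G ⊆ G' ∧ G ≠ G' ∧ Good V z hz v S G' := by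
  obtain ⟨hdom, hfun, hseed, hdown, hstab, hcompl, hstar⟩ := hG
  -- every point of the domain of `G` is `≤ x`
  have hlep : ∀ p ∈ G, p.1 ≤ x := by
    intro p hp
    by_contra hnot
    obtain ⟨W', hW'⟩ := hdown p hp x hxI (le_of_not_ge hnot)
    exact hx W' hW'
  -- the obstruction submodule
  haveI hne1 : Nonempty {p : (x : P) × Submodule k (V.space x) // p ∈ G} := ⟨⟨_, hseed⟩⟩
  haveI hne2 : Nonempty {x' : P // x' ∈ Iset V z hz v ∧ x ≤ x'} := ⟨⟨x, hxI, le_refl x⟩⟩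
  set F₁ : {p : (x : P) × Submodule k (V.space x) // p ∈ G} → Submodule k (V.space x) :=
    fun p => Submodule.map (V.map (hlep p.1 p.2)) p.1.2 with hF₁
  set F₂ : {x' : P // x' ∈ Iset V z hz v ∧ x ≤ x'} → Submodule k (V.space x) :=
    fun q => LinearMap.ker (V.map q.2.2) with hF₂
  have hmapmap : ∀ {a b : P} (hab : a ≤ b) (hbx : b ≤ x) (Wa : Submodule k (V.space a))
      (Wb : Submodule k (V.space b)), Submodule.map (V.map hab) Wa ≤ Wb →
      Submodule.map (V.map (hab.trans hbx)) Wa ≤ Submodule.map (V.map hbx) Wb := by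
    intro a b hab hbx Wa Wb hW w hw
    obtain ⟨t, ht, rfl⟩ := Submodule.mem_map.mp hw
    refine Submodule.mem_map.mpr ⟨V.map hab t, hW (Submodule.mem_map.mpr ⟨t, ht, rfl⟩), ?_⟩
    exact LinearMap.congr_fun (V.map_comp hab hbx) t
  have hdir1 : Directed (· ≤ ·) F₁ := by
    intro p q
    rcases le_total p.1.1 q.1.1 with h | h
    · exact ⟨q, hmapmap h (hlep q.1 q.2) p.1.2 q.1.2
        (hstab p.1.1 q.1.1 p.1.2 q.1.2 h p.2 q.2), le_refl _⟩
    · exact ⟨p, le_refl _, hmapmap h (hlep p.1 p.2) q.1.2 p.1.2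
        (hstab q.1.1 p.1.1 q.1.2 p.1.2 h q.2 p.2)⟩
  have hkermono : ∀ {a b : P} (hab : a ≤ b) (hxa : x ≤ a),
      LinearMap.ker (V.map hxa) ≤ LinearMap.ker (V.map (hxa.trans hab)) := by
    intro a b hab hxa w hw
    rw [LinearMap.mem_ker] at hw ⊢
    rw [← LinearMap.congr_fun (V.map_comp hxa hab) w, LinearMap.comp_apply, hw, map_zero]
  have hdir2 : Directed (· ≤ ·) F₂ := by
    intro p q
    rcases le_total p.1 q.1 with h | h
    · exact ⟨q, hkermono h p.2.2, le_refl _⟩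
    · exact ⟨p, le_refl _, hkermono h q.2.2⟩
  have hnotmem : uvec V z hz v x ∉ (⨆ p, F₁ p) ⊔ (⨆ q, F₂ q) := by
    intro hmem
    obtain ⟨a, ha, b, hb, hab⟩ := Submodule.mem_sup.mp hmem
    rw [Submodule.mem_iSup_of_directed _ hdir1] at ha
    rw [Submodule.mem_iSup_of_directed _ hdir2] at hb
    obtain ⟨⟨⟨y, Wy⟩, hyG⟩, ha⟩ := ha
    obtain ⟨⟨x', hx'I, hxx'⟩, hb⟩ := hb
    obtain ⟨w, hw, hwa⟩ := Submodule.mem_map.mp ha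
    have hyx : y ≤ x := hlep ⟨y, Wy⟩ hyG
    have hyx' : y ≤ x' := hyx.trans hxx'
    have h4 : V.map hyx' (w - uvec V z hz v y) = 0 := by
      rw [map_sub, uvec_map]
      have e1 : V.map hyx' w = V.map hxx' a := by
        rw [← hwa, ← LinearMap.congr_fun (V.map_comp hyx hxx') w, LinearMap.comp_apply]
      have e2 : uvec V z hz v x' = V.map hxx' a := by
        rw [← uvec_map V z hz v hxx', ← hab, map_add,
          LinearMap.mem_ker.mp hb, add_zero]
      rw [e1, ← e2, sub_self]
    have h5 : uvec V z hz v y ∈ Wy := by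
      have hmem' : w - uvec V z hz v y ∈ Wy :=
        hstar y Wy hyG x' hyx' hx'I (LinearMap.mem_ker.mpr h4)
      have : uvec V z hz v y = w - (w - uvec V z hz v y) := by abel
      rw [this]
      exact Wy.sub_mem hw hmem'
    have h6 := Submodule.disjoint_def.mp (hcompl y Wy hyG).disjoint (uvec V z hz v y)
      (Submodule.mem_span_singleton_self _) h5
    exact hdom ⟨y, Wy⟩ hyG h6
  obtain ⟨Wx, hWxle, hWxcompl⟩ := aux_exists_compl _ _ hnotmem
  have himg : ∀ (y : P) (Wy : Submodule k (V.space y)) (h : y ≤ x),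
      (⟨y, Wy⟩ : (x : P) × Submodule k (V.space x)) ∈ G →
      Submodule.map (V.map h) Wy ≤ Wx := by
    intro y Wy h hyG
    exact le_trans (le_trans (le_iSup F₁ ⟨⟨y, Wy⟩, hyG⟩) le_sup_left) hWxle
  have hker : ∀ (x' : P) (h : x ≤ x'), x' ∈ Iset V z hz v →
      LinearMap.ker (V.map h) ≤ Wx := by
    intro x' h hx'
    exact le_trans (le_trans (le_iSup F₂ ⟨x', hx', h⟩) le_sup_right) hWxle
  -- the new entries
  set N : Set ((x : P) × Submodule k (V.space x)) :=
    {q | ∃ hle : q.1 ≤ x, q.1 ∈ Iset V z hz v ∧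
      (∀ W : Submodule k (V.space q.1), (⟨q.1, W⟩ : (x : P) × Submodule k (V.space x)) ∉ G) ∧
      q.2 = Submodule.comap (V.map hle) Wx} with hN
  refine ⟨G ∪ N, Set.subset_union_left, ?_, ?_, ?_, ?_, ?_, ?_, ?_, ?_⟩
  · intro hEq
    have hmemN : (⟨x, Submodule.comap (V.map (le_refl x)) Wx⟩ :
        (x : P) × Submodule k (V.space x)) ∈ N := ⟨le_refl x, hxI, hx, rfl⟩
    have : (⟨x, Submodule.comap (V.map (le_refl x)) Wx⟩ :
        (x : P) × Submodule k (V.space x)) ∈ G := by rw [hEq]; exact Or.inr hmemN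
    exact hx _ this
  · rintro p (hp | hp)
    · exact hdom p hp
    · exact hp.2.1
  · rintro x₀ W W' (h1 | h1) (h2 | h2)
    · exact hfun x₀ W W' h1 h2
    · exact absurd h1 (h2.2.2.1 W)
    · exact absurd h2 (h1.2.2.1 W')
    · obtain ⟨hle, hI0, hnot, hEq⟩ := h1
      obtain ⟨hle', hI0', hnot', hEq'⟩ := h2
      have e1 : W = Submodule.comap (V.map hle) Wx := hEq
      have e2 : W' = Submodule.comap (V.map hle') Wx := hEq'
      rw [e1, e2]
  · exact Or.inl hseed
  · rintro p (hp | hp) y hyI hyle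
    · by_cases hyG : ∃ W : Submodule k (V.space y),
        (⟨y, W⟩ : (x : P) × Submodule k (V.space x)) ∈ G
      · obtain ⟨W, hW⟩ := hyG
        exact ⟨W, Or.inl hW⟩
      · push_neg at hyG
        exact ⟨Submodule.comap (V.map (hyle.trans (hlep p hp))) Wx,
          Or.inr ⟨hyle.trans (hlep p hp), hyI, hyG, rfl⟩⟩
    · obtain ⟨hle, hI0, hnot, hEq⟩ := hp
      by_cases hyG : ∃ W : Submodule k (V.space y),
        (⟨y, W⟩ : (x : P) × Submodule k (V.space x)) ∈ G
      · obtain ⟨W, hW⟩ := hyG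
        exact ⟨W, Or.inl hW⟩
      · push_neg at hyG
        exact ⟨Submodule.comap (V.map (hyle.trans hle)) Wx,
          Or.inr ⟨hyle.trans hle, hyI, hyG, rfl⟩⟩
  · rintro x₀ y₀ W W' h (h1 | h1) (h2 | h2)
    · exact hstab x₀ y₀ W W' h h1 h2
    · obtain ⟨hle', hI0', hnot', hEq'⟩ := h2
      have e2 : W' = Submodule.comap (V.map hle') Wx := hEq'
      rw [e2]
      rintro w ⟨t, ht, rfl⟩
      refine Submodule.mem_comap.mpr ?_
      rw [← LinearMap.comp_apply, V.map_comp]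
      exact himg x₀ W (h.trans hle') h1 (Submodule.mem_map_of_mem ht)
    · obtain ⟨hle, hI0, hnot, hEq⟩ := h1
      obtain ⟨W'', hW''⟩ := hdown ⟨y₀, W'⟩ h2 x₀ hI0 h
      exact absurd hW'' (hnot W'')
    · obtain ⟨hle, hI0, hnot, hEq⟩ := h1
      obtain ⟨hle', hI0', hnot', hEq'⟩ := h2
      have e1 : W = Submodule.comap (V.map hle) Wx := hEq
      have e2 : W' = Submodule.comap (V.map hle') Wx := hEq'
      rw [e1, e2]
      rintro w ⟨t, ht, rfl⟩
      refine Submodule.mem_comap.mpr ?_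
      rw [← LinearMap.comp_apply, V.map_comp]
      exact ht
  · rintro x₀ W (h1 | h1)
    · exact hcompl x₀ W h1
    · obtain ⟨hle, hI0, hnot, hEq⟩ := h1
      have e1 : W = Submodule.comap (V.map hle) Wx := hEq
      rw [e1]
      constructor
      · rw [Submodule.disjoint_def]
        intro w hw1 hw2
        obtain ⟨c, rfl⟩ := Submodule.mem_span_singleton.mp hw1
        have hWmem : c • uvec V z hz v x ∈ Wx := by
          have := Submodule.mem_comap.mp hw2
          rwa [map_smul, uvec_map] at this
        have h0 := Submodule.disjoint_def.mp hWxcompl.disjoint (c • uvec V z hz v x)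
          (Submodule.smul_mem _ c (Submodule.mem_span_singleton_self _)) hWmem
        rcases smul_eq_zero.mp h0 with hc | hc
        · rw [hc, zero_smul]
        · exact absurd hc hxI
      · rw [codisjoint_iff, eq_top_iff]
        intro w _
        have hwmem : V.map hle w ∈ span k {uvec V z hz v x} ⊔ Wx := by
          rw [hWxcompl.sup_eq_top]; trivial
        obtain ⟨a, haa, b, hbb, habw⟩ := Submodule.mem_sup.mp hwmem
        obtain ⟨c, rfl⟩ := Submodule.mem_span_singleton.mp haa
        have hwdec : w = c • uvec V z hz v x₀ + (w - c • uvec V z hz v x₀) := by abel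
        rw [hwdec]
        refine Submodule.add_mem _
          (Submodule.mem_sup_left (Submodule.smul_mem _ c (Submodule.mem_span_singleton_self _)))
          (Submodule.mem_sup_right ?_)
        refine Submodule.mem_comap.mpr ?_
        rw [map_sub, map_smul, uvec_map, ← habw, add_sub_cancel_left]
        exact hbb
  · rintro x₀ W (h1 | h1) x' h hx'I
    · exact hstar x₀ W h1 x' h hx'I
    · obtain ⟨hle, hI0, hnot, hEq⟩ := h1
      have e1 : W = Submodule.comap (V.map hle) Wx := hEq
      rw [e1]
      rcases le_total x' x with hc | hc
      · intro w hw
        refine Submodule.mem_comap.mpr ?_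
        have : V.map hle w = V.map hc (V.map h w) := by
          rw [← LinearMap.comp_apply, V.map_comp]
        rw [this, LinearMap.mem_ker.mp hw, map_zero]
        exact Wx.zero_mem
      · intro w hw
        refine Submodule.mem_comap.mpr ?_
        refine hker x' hc hx'I ?_
        rw [LinearMap.mem_ker, ← LinearMap.comp_apply, V.map_comp]
        exact LinearMap.mem_ker.mp hw

lemma good_sUnion (S : Set (V.space z)) (c : Set (Set ((x : P) × Submodule k (V.space x))))
    (hc : ∀ G ∈ c, Good V z hz v S G) (hchain : IsChain (· ⊆ ·) c) (hne : c.Nonempty) :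
    Good V z hz v S (⋃₀ c) := by
  have hpair : ∀ {G₁ G₂ : Set ((x : P) × Submodule k (V.space x))}, G₁ ∈ c → G₂ ∈ c →
      ∃ G ∈ c, G₁ ⊆ G ∧ G₂ ⊆ G := by
    intro G₁ G₂ h1 h2
    rcases hchain.total h1 h2 with h | h
    · exact ⟨G₂, h2, h, le_refl _⟩
    · exact ⟨G₁, h1, le_refl _, h⟩
  refine ⟨?_, ?_, ?_, ?_, ?_, ?_, ?_⟩
  · rintro p ⟨G, hGc, hp⟩
    exact (hc G hGc).1 p hp
  · rintro x W W' ⟨G₁, h1c, h1⟩ ⟨G₂, h2c, h2⟩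
    obtain ⟨G, hGc, hs1, hs2⟩ := hpair h1c h2c
    exact (hc G hGc).2.1 x W W' (hs1 h1) (hs2 h2)
  · obtain ⟨G, hGc⟩ := hne
    exact ⟨G, hGc, (hc G hGc).2.2.1⟩
  · rintro p ⟨G, hGc, hp⟩ y hyI hyle
    obtain ⟨W', hW'⟩ := (hc G hGc).2.2.2.1 p hp y hyI hyle
    exact ⟨W', G, hGc, hW'⟩
  · rintro x y W W' h ⟨G₁, h1c, h1⟩ ⟨G₂, h2c, h2⟩
    obtain ⟨G, hGc, hs1, hs2⟩ := hpair h1c h2c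
    exact (hc G hGc).2.2.2.2.1 x y W W' h (hs1 h1) (hs2 h2)
  · rintro x W ⟨G, hGc, hp⟩
    exact (hc G hGc).2.2.2.2.2.1 x W hp
  · rintro x W ⟨G, hGc, hp⟩
    exact (hc G hGc).2.2.2.2.2.2 x W hp

end SplitIntervalAux

/-- Splitting off an interval summand at a minimal element: let `P` be totally
ordered with least element `z`, `V` pointwise finite dimensional with `V_z ≠ 0`,
`B` a basis of `V_z` compatible with the flag of kernels of `V` at `z`, and `v ∈ B`.
Then `V = U ⊕ W` with `U` an interval module, `{v}` a basis of `U_z` and `B - {v}` a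
basis of `W_z`. -/
theorem split_interval_at_min (P : Type v) [LinearOrder P]
    (V : PersMod.{u, v, w} k P) (hfd : ∀ x : P, FiniteDimensional k (V.space x))
    (z : P) (hz : ∀ x : P, z ≤ x) (hVz : ∃ v : V.space z, v ≠ 0)
    (B : Set (V.space z))
    (hBind : LinearIndependent k ((↑) : B → V.space z))
    (hBspan : Submodule.span k B = ⊤)
    (hBcompat : ∀ (x : P) (h : z ≤ x),
      Submodule.span k (B ∩ LinearMap.ker (V.map h)) = LinearMap.ker (V.map h))
    (v : V.space z) (hv : v ∈ B) :
    ∃ U W : PersSubmod k V,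
      (∀ x : P, IsCompl (U.carrier x) (W.carrier x)) ∧
      IsIntervalModule k U.toPersMod ∧
      U.carrier z = Submodule.span k {v} ∧
      W.carrier z = Submodule.span k (B \ {v}) := by
  classical
  have hv0 : v ≠ 0 := hBind.ne_zero ⟨v, hv⟩
  have huz : SplitIntervalAux.uvec V z hz v z = v := by
    show V.map (hz z) v = v
    have h1 : V.map (hz z) = (LinearMap.id : V.space z →ₗ[k] V.space z) := V.map_id z
    rw [h1, LinearMap.id_apply]
  have hzI : z ∈ SplitIntervalAux.Iset V z hz v := by
    show SplitIntervalAux.uvec V z hz v z ≠ 0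
    rw [huz]; exact hv0
  -- the complement of `span {v}` spanned by the rest of the basis
  have hdisj : Disjoint (Submodule.span k {v}) (Submodule.span k (B \ {v})) := by
    have h1 := hBind.disjoint_span_image
      (s := {(⟨v, hv⟩ : B)}) (t := {(⟨v, hv⟩ : B)}ᶜ) disjoint_compl_right
    have e1 : ((↑) : B → V.space z) '' ({(⟨v, hv⟩ : B)} : Set B) = {v} := by simp
    have e2 : ((↑) : B → V.space z) '' (({(⟨v, hv⟩ : B)}ᶜ : Set B)) = B \ {v} := by
      ext w
      constructor
      · rintro ⟨j, hj, rfl⟩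
        refine ⟨j.2, ?_⟩
        intro hj2
        rw [Set.mem_singleton_iff] at hj2
        exact hj (by rwa [Set.mem_singleton_iff, Subtype.ext_iff])
      · rintro ⟨hwB, hwv⟩
        exact ⟨⟨w, hwB⟩, by simpa [Subtype.ext_iff] using hwv, rfl⟩
    rwa [e1, e2] at h1
  have hsup : Submodule.span k {v} ⊔ Submodule.span k (B \ {v}) = ⊤ := by
    rw [← Submodule.span_union, Set.singleton_union, Set.insert_diff_singleton,
      Set.insert_eq_self.mpr hv, hBspan]
  have hcomplB : IsCompl (Submodule.span k {v}) (Submodule.span k (B \ {v})) :=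
    ⟨hdisj, codisjoint_iff.mpr hsup⟩
  have hstarz : ∀ (x' : P) (h : z ≤ x'), x' ∈ SplitIntervalAux.Iset V z hz v →
      LinearMap.ker (V.map h) ≤ Submodule.span k (B \ {v}) := by
    intro x' h hx'
    rw [← hBcompat x' h]
    apply Submodule.span_mono
    rintro w ⟨hwB, hwker⟩
    refine ⟨hwB, ?_⟩
    intro hwv
    rw [Set.mem_singleton_iff] at hwv
    subst hwv
    exact hx' (LinearMap.mem_ker.mp hwker)
  -- the seed system and Zorn's lemma
  have hG₀ : SplitIntervalAux.Good V z hz v (B \ {v})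
      {(⟨z, Submodule.span k (B \ {v})⟩ : (x : P) × Submodule k (V.space x))} := by
    refine ⟨?_, ?_, rfl, ?_, ?_, ?_, ?_⟩
    · rintro p hp
      rw [Set.mem_singleton_iff] at hp
      subst hp
      exact hzI
    · intro x W W' h1 h2
      rw [Set.mem_singleton_iff] at h1 h2
      injection h1 with h1a h1b
      injection h2 with h2a h2b
      subst h1a
      rw [eq_of_heq h1b, eq_of_heq h2b]
    · rintro p hp y hyI hyle
      rw [Set.mem_singleton_iff] at hp
      subst hp
      have : y = z := le_antisymm hyle (hz y)
      subst this
      exact ⟨Submodule.span k (B \ {v}), rfl⟩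
    · intro x y W W' h h1 h2
      rw [Set.mem_singleton_iff] at h1 h2
      injection h1 with h1a h1b
      injection h2 with h2a h2b
      subst h1a
      subst h2a
      rw [eq_of_heq h1b, eq_of_heq h2b]
      have hid : V.map h = LinearMap.id := V.map_id _
      rw [hid, Submodule.map_id]
    · intro x W h1
      rw [Set.mem_singleton_iff] at h1
      injection h1 with h1a h1b
      subst h1a
      rw [eq_of_heq h1b, huz]
      exact hcomplB
    · intro x W h1
      rw [Set.mem_singleton_iff] at h1
      injection h1 with h1a h1b
      subst h1a
      rw [eq_of_heq h1b]
      exact hstarz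
  obtain ⟨M, hM0, hMmax⟩ := zorn_subset_nonempty
    {G : Set ((x : P) × Submodule k (V.space x)) | SplitIntervalAux.Good V z hz v (B \ {v}) G}
    (fun c hcS hchain hcne =>
      ⟨⋃₀ c, SplitIntervalAux.good_sUnion V z hz v (B \ {v}) c (fun G hG => hcS hG) hchain hcne,
        fun s hs => Set.subset_sUnion_of_mem hs⟩)
    _ hG₀
  have hMGood : SplitIntervalAux.Good V z hz v (B \ {v}) M := hMmax.1
  have hfull : ∀ x ∈ SplitIntervalAux.Iset V z hz v,
      ∃ W : Submodule k (V.space x), (⟨x, W⟩ : (x : P) × Submodule k (V.space x)) ∈ M := by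
    intro x hxm
    by_contra hnone
    push_neg at hnone
    obtain ⟨G', hsub, hne, hgood⟩ :=
      SplitIntervalAux.good_extend V z hz v (B \ {v}) M hMGood x hxm hnone
    exact hne (subset_antisymm hsub (hMmax.2 hgood hsub))
  obtain ⟨hdom, hfun, hseedM, hdown, hstab, hcompl, hstar⟩ := hMGood
  choose Wfun hWfun using hfull
  let WG : ∀ x : P, Submodule k (V.space x) := fun x =>
    if h : x ∈ SplitIntervalAux.Iset V z hz v then Wfun x h else ⊤
  have hWGI : ∀ (x : P) (h : x ∈ SplitIntervalAux.Iset V z hz v), WG x = Wfun x h :=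
    fun x h => dif_pos h
  have hWGtop : ∀ (x : P), x ∉ SplitIntervalAux.Iset V z hz v → WG x = ⊤ :=
    fun x h => dif_neg h
  have hWGmem : ∀ (x : P) (h : x ∈ SplitIntervalAux.Iset V z hz v),
      (⟨x, WG x⟩ : (x : P) × Submodule k (V.space x)) ∈ M := by
    intro x h
    rw [hWGI x h]
    exact hWfun x h
  -- the two submodules
  have hUmap : ∀ {x y : P} (h : x ≤ y),
      ∀ w ∈ Submodule.span k {SplitIntervalAux.uvec V z hz v x},
      V.map h w ∈ Submodule.span k {SplitIntervalAux.uvec V z hz v y} := by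
    intro x y h w hw
    obtain ⟨c, rfl⟩ := Submodule.mem_span_singleton.mp hw
    rw [map_smul, SplitIntervalAux.uvec_map]
    exact Submodule.smul_mem _ _ (Submodule.mem_span_singleton_self _)
  have hWmap : ∀ {x y : P} (h : x ≤ y), ∀ w ∈ WG x, V.map h w ∈ WG y := by
    intro x y h w hw
    by_cases hy : y ∈ SplitIntervalAux.Iset V z hz v
    · have hx : x ∈ SplitIntervalAux.Iset V z hz v := SplitIntervalAux.Iset_down V z hz v h hy
      exact hstab x y (WG x) (WG y) h (hWGmem x hx) (hWGmem y hy) (Submodule.mem_map_of_mem hw)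
    · rw [hWGtop y hy]
      trivial
  -- interval structure on the support
  have hIconv : IsConvexIn (SplitIntervalAux.Iset V z hz v) := by
    intro a bb cc hb hc hab hbc
    exact SplitIntervalAux.Iset_down V z hz v hbc hc
  have hIconn : IsConnectedIn (SplitIntervalAux.Iset V z hz v) := by
    intro a ha c hc
    refine ⟨2, fun i => if i = 0 then a else if i = 1 then z else c, ?_, ?_, ?_, ?_⟩
    · intro i hi
      rcases i with _ | _ | i
      · simpa using ha
      · simpa using hzI
      · simpa using hc
    · simp
    · norm_num
    · intro i hi
      interval_cases i
      · exact Or.inr (by simpa using hz a)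
      · exact Or.inl (by simpa using hz c)
  -- the interval module property
  have hinterval : ∀ (US : PersSubmod k V),
      US.carrier = (fun x => Submodule.span k {SplitIntervalAux.uvec V z hz v x}) →
      IsIntervalModule k US.toPersMod := by
    rintro ⟨car, maple⟩ hcar
    have hcar' : car = (fun x => Submodule.span k {SplitIntervalAux.uvec V z hz v x}) := hcar
    subst hcar'
    refine ⟨SplitIntervalAux.Iset V z hz v, ⟨⟨z, hzI⟩, hIconv, hIconn⟩, ⟨?_⟩⟩
    -- the pointwise equivalence, from the constant module to the span
    let f : ∀ x : P, (constSub k (SplitIntervalAux.Iset V z hz v) x) →ₗ[k]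
        (Submodule.span k {SplitIntervalAux.uvec V z hz v x}) := fun x =>
      LinearMap.codRestrict _
        ((LinearMap.toSpanSingleton k (V.space x) (SplitIntervalAux.uvec V z hz v x)).comp
          (Submodule.subtype _))
        (fun c => Submodule.smul_mem _ _ (Submodule.mem_span_singleton_self _))
    have hval : ∀ (x : P) (c : constSub k (SplitIntervalAux.Iset V z hz v) x),
        ((f x c : Submodule.span k {SplitIntervalAux.uvec V z hz v x}) : V.space x)
          = (c : k) • SplitIntervalAux.uvec V z hz v x := fun x c => rfl
    have hbij : ∀ x : P, Function.Bijective (f x) := by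
      intro x
      constructor
      · rintro ⟨a, hamem⟩ ⟨b, hbmem⟩ hab
        have h1 : a • SplitIntervalAux.uvec V z hz v x
            = b • SplitIntervalAux.uvec V z hz v x := by
          rw [← hval x ⟨a, hamem⟩, ← hval x ⟨b, hbmem⟩, hab]
        apply Subtype.ext
        by_cases hxI : x ∈ SplitIntervalAux.Iset V z hz v
        · have h2 : (a - b) • SplitIntervalAux.uvec V z hz v x = 0 := by
            rw [sub_smul, h1, sub_self]
          rcases smul_eq_zero.mp h2 with h3 | h3
          · exact sub_eq_zero.mp h3
          · exact absurd h3 hxI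
        · have hcb : constSub k (SplitIntervalAux.Iset V z hz v) x = ⊥ := if_neg hxI
          rw [hcb, Submodule.mem_bot] at hamem hbmem
          show a = b
          rw [hamem, hbmem]
      · rintro ⟨w, hw⟩
        obtain ⟨c, hc⟩ := Submodule.mem_span_singleton.mp hw
        by_cases hxI : x ∈ SplitIntervalAux.Iset V z hz v
        · refine ⟨⟨c, ?_⟩, ?_⟩
          · have hct : constSub k (SplitIntervalAux.Iset V z hz v) x = ⊤ := if_pos hxI
            rw [hct]
            trivial
          · exact Subtype.ext hc
        · have hu0 : SplitIntervalAux.uvec V z hz v x = 0 := not_not.mp hxI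
          refine ⟨⟨0, Submodule.zero_mem _⟩, ?_⟩
          apply Subtype.ext
          show (0 : k) • SplitIntervalAux.uvec V z hz v x = w
          rw [zero_smul, ← hc, hu0, smul_zero]
    have key : ∀ (x y : P) (h : x ≤ y) (c : constSub k (SplitIntervalAux.Iset V z hz v) x),
        (V.map h).restrict (maple h) ((LinearEquiv.ofBijective (f x) (hbij x)) c) =
        (LinearEquiv.ofBijective (f y) (hbij y))
          (constMap k (SplitIntervalAux.Iset V z hz v) x y c) := by
      intro x y h c
      have hcm : ((constMap k (SplitIntervalAux.Iset V z hz v) x y c :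
          constSub k (SplitIntervalAux.Iset V z hz v) y) : k)
          = if y ∈ SplitIntervalAux.Iset V z hz v then (c : k) else 0 := by
        by_cases hy : y ∈ SplitIntervalAux.Iset V z hz v
        · simp [constMap, hy]
        · simp [constMap, hy]
      apply Subtype.ext
      simp only [LinearEquiv.ofBijective_apply]
      rw [LinearMap.restrict_coe_apply, hval, hval, hcm, map_smul,
        SplitIntervalAux.uvec_map]
      by_cases hy : y ∈ SplitIntervalAux.Iset V z hz v
      · rw [if_pos hy]
      · rw [if_neg hy, zero_smul, (not_not.mp hy :
          SplitIntervalAux.uvec V z hz v y = 0), smul_zero]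
    refine ⟨fun x => (LinearEquiv.ofBijective (f x) (hbij x)).symm, ?_⟩
    intro x y h w
    show (LinearEquiv.ofBijective (f y) (hbij y)).symm ((V.map h).restrict (maple h) w)
        = constMap k (SplitIntervalAux.Iset V z hz v) x y
            ((LinearEquiv.ofBijective (f x) (hbij x)).symm w)
    rw [LinearEquiv.symm_apply_eq]
    conv_lhs => rw [← LinearEquiv.apply_symm_apply (LinearEquiv.ofBijective (f x) (hbij x)) w]
    exact key x y h _
  refine ⟨⟨fun x => Submodule.span k {SplitIntervalAux.uvec V z hz v x}, hUmap⟩,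
    ⟨WG, hWmap⟩, ?_, ?_, ?_, ?_⟩
  · intro x
    by_cases hxm : x ∈ SplitIntervalAux.Iset V z hz v
    · show IsCompl (Submodule.span k {SplitIntervalAux.uvec V z hz v x}) (WG x)
      rw [hWGI x hxm]
      exact hcompl x (Wfun x hxm) (hWfun x hxm)
    · show IsCompl (Submodule.span k {SplitIntervalAux.uvec V z hz v x}) (WG x)
      rw [hWGtop x hxm, (not_not.mp hxm : SplitIntervalAux.uvec V z hz v x = 0),
        Submodule.span_zero_singleton]
      exact isCompl_bot_top
  · exact hinterval _ rfl
  · show Submodule.span k {SplitIntervalAux.uvec V z hz v z} = Submodule.span k {v}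
    rw [huz]
  · show WG z = Submodule.span k (B \ {v})
    rw [hWGI z hzI]
    exact hfun z (Wfun z hzI) (Submodule.span k (B \ {v})) (hWfun z hzI) hseedM
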